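/- Let P ∈ ℝ^{n×n} be doubly stochastic with second largest singular value σ₂(P); let χ ⊆ ℝ^d be a closed convex set containing 0, with Euclidean projection Π_χ; and let (α_t)_{t≥1} be a positive non-increasing sequence. Suppose g_{i,t} ∈ ℝ^d and matrices A_i together with vectors λ_{i,t} satisfy ‖g_{i,t}‖ ≤ L_f and ‖A_iᵀλ_{i,t}‖ ≤ ζ^max for all i ∈ [n], t ≥ 1. Define x_{i,1} = 0 and, for t ≥ 1, h_{i,t+1} = Σ_{j=1}^n P_{ji} x_{j,t} − α_t(g_{i,t} + A_iᵀλ_{i,t+1}) and x_{i,t+1} = Π_χ(h_{i,t+1}); let θ_t = (1/n)Σ_{i=1}^n x_{i,t}. Then for all i ∈ [n] and t ≥ 1, ‖θ_t − x_{i,t}‖ ≤ 2√n·(L_f + ζ^max)·Σ_{k=1}^{t−1} α_{t−k}·σ₂(P)^{k−1}. -/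

import Mathlib

open Matrix
open scoped RealInnerProductSpace

/-- The singular values of a square real matrix `M`, namely the square roots of the
eigenvalues of the Hermitian matrix `M * Mᴴ` (with multiplicity, in arbitrary order). -/
noncomputable def singVals {n : ℕ} (M : Matrix (Fin n) (Fin n) ℝ) : Fin n → ℝ :=
  fun i => Real.sqrt ((Matrix.isHermitian_mul_conjTranspose_self M).eigenvalues i)

/-- The second largest singular value (with multiplicity) of a square real matrix. -/
noncomputable def sigma2 {n : ℕ} (M : Matrix (Fin n) (Fin n) ℝ) : ℝ :=
  sSup {s : ℝ | ∃ i j : Fin n, i ≠ j ∧ s = min (singVals M i) (singVals M j)}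

lemma sigma2_set_finite {n : ℕ} (M : Matrix (Fin n) (Fin n) ℝ) :
    {s : ℝ | ∃ i j : Fin n, i ≠ j ∧ s = min (singVals M i) (singVals M j)}.Finite := by
  apply Set.Finite.subset (Set.finite_range
    (fun p : Fin n × Fin n => min (singVals M p.1) (singVals M p.2)))
  rintro s ⟨i, j, hij, rfl⟩
  exact ⟨(i, j), rfl⟩

lemma le_sigma2 {n : ℕ} (M : Matrix (Fin n) (Fin n) ℝ) {i j : Fin n} (hij : i ≠ j) :
    min (singVals M i) (singVals M j) ≤ sigma2 M :=
  le_csSup (sigma2_set_finite M).bddAbove ⟨i, j, hij, rfl⟩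

lemma sigma2_nonneg {n : ℕ} (M : Matrix (Fin n) (Fin n) ℝ) : 0 ≤ sigma2 M := by
  rcases le_or_gt n 1 with hn | hn
  · have hempty : {s : ℝ | ∃ i j : Fin n, i ≠ j ∧ s = min (singVals M i) (singVals M j)} = ∅ := by
      ext s
      simp only [Set.mem_setOf_eq, Set.mem_empty_iff_false, iff_false]
      rintro ⟨i, j, hij, -⟩
      exact hij (Fin.ext (by omega))
    rw [sigma2, hempty, Real.sSup_empty]
  · have h0 : (⟨0, by omega⟩ : Fin n) ≠ ⟨1, by omega⟩ := by simp [Fin.ext_iff]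
    exact le_trans (le_min (Real.sqrt_nonneg _) (Real.sqrt_nonneg _)) (le_sigma2 M h0)

lemma qbound {n : ℕ} (P : Matrix (Fin n) (Fin n) ℝ) (hPnn : ∀ i j, 0 ≤ P i j)
    (hProw : ∀ i, ∑ j, P i j = 1) (hPcol : ∀ j, ∑ i, P i j = 1) (v : Fin n → ℝ) :
    ∑ i, (Pᵀ *ᵥ v) i ^ 2 ≤ ∑ i, v i ^ 2 := by
  have key : ∀ i, (Pᵀ *ᵥ v) i ^ 2 ≤ ∑ j, P j i * v j ^ 2 := by
    intro i
    have h1 : (Pᵀ *ᵥ v) i = ∑ j, Real.sqrt (P j i) * (Real.sqrt (P j i) * v j) := by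
      simp only [Matrix.mulVec, dotProduct, Matrix.transpose_apply, ← mul_assoc,
        Real.mul_self_sqrt (hPnn _ _)]
    rw [h1]
    calc (∑ j, Real.sqrt (P j i) * (Real.sqrt (P j i) * v j)) ^ 2
        ≤ (∑ j, Real.sqrt (P j i) ^ 2) * ∑ j, (Real.sqrt (P j i) * v j) ^ 2 :=
          Finset.sum_mul_sq_le_sq_mul_sq _ _ _
      _ = ∑ j, P j i * v j ^ 2 := by
          simp only [Real.sq_sqrt (hPnn _ _), hPcol i, one_mul, mul_pow]
  calc ∑ i, (Pᵀ *ᵥ v) i ^ 2 ≤ ∑ i, ∑ j, P j i * v j ^ 2 := Finset.sum_le_sum fun i _ => key i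
    _ = ∑ j, (∑ i, P j i) * v j ^ 2 := by rw [Finset.sum_comm]; simp [Finset.sum_mul]
    _ = ∑ j, v j ^ 2 := by simp [hProw]

lemma mix {n : ℕ} (P : Matrix (Fin n) (Fin n) ℝ) (hPnn : ∀ i j, 0 ≤ P i j)
    (hProw : ∀ i, ∑ j, P i j = 1) (hPcol : ∀ j, ∑ i, P i j = 1)
    (w : Fin n → ℝ) (hw : ∑ i, w i = 0) :
    ∑ i, (Pᵀ *ᵥ w) i ^ 2 ≤ sigma2 P ^ 2 * ∑ i, w i ^ 2 := by
  rcases Nat.eq_zero_or_pos n with hn | hn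
  · subst hn; simp
  have hQ : (P * Pᴴ).IsHermitian := Matrix.isHermitian_mul_conjTranspose_self P
  have hPH : Pᴴ = Pᵀ := Matrix.conjTranspose_eq_transpose_of_trivial P
  have hQT : (P * Pᴴ)ᵀ = P * Pᴴ := by
    rw [← Matrix.conjTranspose_eq_transpose_of_trivial]; exact hQ
  set B := hQ.eigenvectorBasis with hB
  set μ := hQ.eigenvalues with hμdef
  have hsv : ∀ i, singVals P i = Real.sqrt (μ i) := fun i => rfl
  have hconv : ∀ a b : EuclideanSpace ℝ (Fin n), ⟪a, b⟫ = (a : Fin n → ℝ) ⬝ᵥ (b : Fin n → ℝ) := by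
    intro a b
    simp [PiLp.inner_apply, RCLike.inner_apply, dotProduct, mul_comm]
  -- Parseval
  have P1 : ∀ a b : Fin n → ℝ, ∑ i, ((B i : Fin n → ℝ) ⬝ᵥ a) * ((B i : Fin n → ℝ) ⬝ᵥ b) = a ⬝ᵥ b := by
    intro a b
    have := B.sum_inner_mul_inner (WithLp.toLp 2 a) (WithLp.toLp 2 b)
    simp only [hconv] at this
    simpa [dotProduct_comm] using this
  -- norm one
  have P2 : ∀ i, (B i : Fin n → ℝ) ⬝ᵥ (B i : Fin n → ℝ) = 1 := by
    intro i
    have h1 : ‖B i‖ = 1 := B.orthonormal.1 i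
    have h2 : ⟪B i, B i⟫ = ‖B i‖ ^ 2 := real_inner_self_eq_norm_sq (B i)
    rw [hconv] at h2
    rw [h2, h1, one_pow]
  -- key eigen identity
  have K : ∀ (v : Fin n → ℝ) (i : Fin n),
      (B i : Fin n → ℝ) ⬝ᵥ ((P * Pᴴ) *ᵥ v) = μ i * ((B i : Fin n → ℝ) ⬝ᵥ v) := by
    intro v i
    have h1 : (B i : Fin n → ℝ) ⬝ᵥ ((P * Pᴴ) *ᵥ v) = ((P * Pᴴ) *ᵥ (B i : Fin n → ℝ)) ⬝ᵥ v := by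
      rw [Matrix.dotProduct_mulVec]
      congr 1
      rw [← Matrix.mulVec_transpose, hQT]
    have h2 : (P * Pᴴ) *ᵥ (B i : Fin n → ℝ) = μ i • (B i : Fin n → ℝ) :=
      hQ.mulVec_eigenvectorBasis i
    rw [h1, h2, smul_dotProduct, smul_eq_mul]
  -- quadratic form
  have hquad : ∀ v : Fin n → ℝ, v ⬝ᵥ ((P * Pᴴ) *ᵥ v) = ∑ j, (Pᵀ *ᵥ v) j ^ 2 := by
    intro v
    have h1 : (P * Pᴴ) *ᵥ v = P *ᵥ (Pᵀ *ᵥ v) := by rw [Matrix.mulVec_mulVec, hPH]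
    rw [h1, Matrix.dotProduct_mulVec, ← Matrix.mulVec_transpose]
    simp [dotProduct, sq]
  set c : Fin n → ℝ := fun i => (B i : Fin n → ℝ) ⬝ᵥ w with hc
  set dd : Fin n → ℝ := fun i => (B i : Fin n → ℝ) ⬝ᵥ (fun _ => 1) with hdd
  have hLHS : ∑ i, (Pᵀ *ᵥ w) i ^ 2 = ∑ i, μ i * c i ^ 2 := by
    rw [← hquad w, ← P1 w ((P * Pᴴ) *ᵥ w)]
    refine Finset.sum_congr rfl fun i _ => ?_
    rw [K w i]; ring
  have hRHS : ∑ i, w i ^ 2 = ∑ i, c i ^ 2 := by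
    have h := P1 w w
    calc ∑ i, w i ^ 2 = w ⬝ᵥ w := by simp [dotProduct, sq]
      _ = ∑ i, c i * c i := h.symm
      _ = ∑ i, c i ^ 2 := by simp [sq]
  have hμ01 : ∀ i, 0 ≤ μ i ∧ μ i ≤ 1 := by
    intro i
    have h1 : μ i = ∑ j, (Pᵀ *ᵥ (B i : Fin n → ℝ)) j ^ 2 := by
      have := K (B i : Fin n → ℝ) i
      rw [P2 i, mul_one] at this
      rw [← this, hquad]
    constructor
    · rw [h1]; positivity
    · rw [h1]
      calc ∑ j, (Pᵀ *ᵥ (B i : Fin n → ℝ)) j ^ 2 ≤ ∑ j, (B i : Fin n → ℝ) j ^ 2 :=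
            qbound P hPnn hProw hPcol _
        _ = 1 := by
            have := P2 i
            simp only [dotProduct] at this
            rw [← this]
            exact Finset.sum_congr rfl fun j _ => by ring
  have hQone : (P * Pᴴ) *ᵥ (fun _ => (1:ℝ)) = (fun _ => (1:ℝ)) := by
    have h1 : Pᴴ *ᵥ (fun _ => (1:ℝ)) = fun _ => (1:ℝ) := by
      rw [hPH]; funext j
      simp [Matrix.mulVec, dotProduct, hPcol j]
    rw [← Matrix.mulVec_mulVec, h1]
    funext j
    simp [Matrix.mulVec, dotProduct, hProw j]
  have hfix : ∀ i, μ i * dd i = dd i := by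
    intro i
    have := K (fun _ => (1:ℝ)) i
    rw [hQone] at this
    exact this.symm
  have hone : ∃ i0, dd i0 ≠ 0 := by
    by_contra hcon
    push_neg at hcon
    have h1 : ((fun _ => (1:ℝ)) : Fin n → ℝ) ⬝ᵥ (fun _ => (1:ℝ)) = 0 := by
      rw [← P1]
      exact Finset.sum_eq_zero fun i _ => by show dd i * dd i = 0; rw [hcon i, zero_mul]
    have h2 : ((fun _ => (1:ℝ)) : Fin n → ℝ) ⬝ᵥ (fun _ => (1:ℝ)) = n := by
      simp [dotProduct]
    rw [h2] at h1
    exact absurd h1 (by positivity)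
  obtain ⟨i₀, hd0⟩ := hone
  have hμi₀ : μ i₀ = 1 := mul_right_cancel₀ hd0 (by rw [hfix i₀, one_mul])
  have hsum0 : ∑ i, dd i * c i = 0 := by
    rw [P1]
    have : ((fun _ => (1:ℝ)) : Fin n → ℝ) ⬝ᵥ w = ∑ i, w i := by simp [dotProduct]
    rw [this, hw]
  have hcsq : 0 ≤ ∑ i, c i ^ 2 := Finset.sum_nonneg fun i _ => sq_nonneg _
  rw [hLHS, hRHS]
  by_cases hex : ∃ j, j ≠ i₀ ∧ μ j = 1
  · obtain ⟨j, hj, hμj⟩ := hex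
    have h1σ : (1:ℝ) ≤ sigma2 P := by
      have := le_sigma2 P (show i₀ ≠ j from fun hh => hj hh.symm)
      simpa [hsv, hμi₀, hμj, Real.sqrt_one] using this
    calc ∑ i, μ i * c i ^ 2 ≤ ∑ i, c i ^ 2 :=
          Finset.sum_le_sum fun i _ => by nlinarith [(hμ01 i).2, sq_nonneg (c i)]
      _ ≤ sigma2 P ^ 2 * ∑ i, c i ^ 2 := by
          nlinarith [mul_nonneg (show (0:ℝ) ≤ sigma2 P ^ 2 - 1 by nlinarith) hcsq]
  · push_neg at hex
    have hdj : ∀ j, j ≠ i₀ → dd j = 0 := by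
      intro j hjne
      by_contra hne
      exact hex j hjne (mul_right_cancel₀ hne (by rw [hfix j, one_mul]))
    have hci0 : c i₀ = 0 := by
      have hsum : ∑ i, dd i * c i = dd i₀ * c i₀ :=
        Finset.sum_eq_single i₀ (fun j _ hjne => by rw [hdj j hjne, zero_mul]) (by simp)
      rw [hsum0] at hsum
      rcases mul_eq_zero.1 hsum.symm with h | h
      · exact absurd h hd0
      · exact h
    have hterm : ∀ j, μ j * c j ^ 2 ≤ sigma2 P ^ 2 * c j ^ 2 := by
      intro j
      rcases eq_or_ne j i₀ with rfl | hjne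
      · rw [hci0]; simp
      · have hμj1 : μ j ≤ 1 := (hμ01 j).2
        have hμj0 : 0 ≤ μ j := (hμ01 j).1
        have hmin : min (singVals P i₀) (singVals P j) = Real.sqrt (μ j) := by
          rw [hsv, hsv, hμi₀, Real.sqrt_one]
          exact min_eq_right (by simpa using Real.sqrt_le_sqrt hμj1)
        have hle : Real.sqrt (μ j) ≤ sigma2 P := by
          rw [← hmin]; exact le_sigma2 P (Ne.symm hjne)
        have hμle : μ j ≤ sigma2 P ^ 2 := by
          nlinarith [Real.sq_sqrt hμj0, Real.sqrt_nonneg (μ j)]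
        nlinarith [sq_nonneg (c j)]
    calc ∑ i, μ i * c i ^ 2 ≤ ∑ i, sigma2 P ^ 2 * c i ^ 2 :=
          Finset.sum_le_sum fun i _ => hterm i
      _ = sigma2 P ^ 2 * ∑ i, c i ^ 2 := by rw [Finset.mul_sum]


lemma euclid_norm_sq {d : ℕ} (v : EuclideanSpace ℝ (Fin d)) : ‖v‖ ^ 2 = ∑ ℓ, (v ℓ) ^ 2 := by
  have h : ∑ ℓ, ‖v ℓ‖ ^ 2 = ∑ ℓ, (v ℓ) ^ 2 := by
    refine Finset.sum_congr rfl fun ℓ _ => ?_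
    rw [Real.norm_eq_abs, sq_abs]
  rw [EuclideanSpace.norm_eq]
  rw [Real.sq_sqrt (Finset.sum_nonneg fun ℓ _ => sq_nonneg _)]
  exact h

/-- network-effect bound for OD-ADMM via distributed gradient descent:
`‖θ_t - x_{i,t}‖ ≤ 2 √n (L_f + ζ^max) Σ_{k=1}^{t-1} α_{t-k} σ₂(P)^{k-1}`. -/
theorem stmt_8 {n d : ℕ} (P : Matrix (Fin n) (Fin n) ℝ)
    (hPnn : ∀ i j, 0 ≤ P i j)
    (hProw : ∀ i, ∑ j, P i j = 1)
    (hPcol : ∀ j, ∑ i, P i j = 1)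
    (χ : Set (EuclideanSpace ℝ (Fin d)))
    (hχcl : IsClosed χ) (hχconv : Convex ℝ χ) (hχ0 : (0 : EuclideanSpace ℝ (Fin d)) ∈ χ)
    (proj : EuclideanSpace ℝ (Fin d) → EuclideanSpace ℝ (Fin d))
    (hprojmem : ∀ u, proj u ∈ χ)
    (hprojclosest : ∀ u, ∀ w ∈ χ, ‖u - proj u‖ ≤ ‖u - w‖)
    (α : ℕ → ℝ) (hαpos : ∀ t : ℕ, 1 ≤ t → 0 < α t)
    (hαmono : ∀ s t : ℕ, 1 ≤ s → s ≤ t → α t ≤ α s)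
    (m : Fin n → ℕ)
    (A : ∀ i : Fin n, Matrix (Fin (m i)) (Fin d) ℝ)
    (g : Fin n → ℕ → EuclideanSpace ℝ (Fin d))
    (lam : ∀ i : Fin n, ℕ → EuclideanSpace ℝ (Fin (m i)))
    (Lf ζmax : ℝ)
    (hg : ∀ i : Fin n, ∀ t : ℕ, 1 ≤ t → ‖g i t‖ ≤ Lf)
    (hlam : ∀ i : Fin n, ∀ t : ℕ, 1 ≤ t →
      ‖Matrix.toEuclideanLin (A i)ᵀ (lam i t)‖ ≤ ζmax)
    (x h : Fin n → ℕ → EuclideanSpace ℝ (Fin d)) (θ : ℕ → EuclideanSpace ℝ (Fin d))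
    (hx1 : ∀ i, x i 1 = 0)
    (hhrec : ∀ i : Fin n, ∀ t : ℕ, 1 ≤ t →
      h i (t + 1) = (∑ j, P j i • x j t)
        - α t • (g i t + Matrix.toEuclideanLin (A i)ᵀ (lam i (t + 1))))
    (hxproj : ∀ i : Fin n, ∀ t : ℕ, 1 ≤ t → x i (t + 1) = proj (h i (t + 1)))
    (hθ : ∀ t : ℕ, θ t = (n : ℝ)⁻¹ • ∑ i, x i t)
    (i : Fin n) (t : ℕ) (ht : 1 ≤ t) :
    ‖θ t - x i t‖ ≤ 2 * Real.sqrt n * (Lf + ζmax)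
      * ∑ k ∈ Finset.Icc 1 (t - 1), α (t - k) * sigma2 P ^ (k - 1) := by
  have hn0 : 0 < n := i.pos
  have hnR : ((n : ℝ)) ≠ 0 := Nat.cast_ne_zero.2 hn0.ne'
  have hC0 : 0 ≤ Lf + ζmax := by
    have h1 := hg i 1 le_rfl
    have h2 := hlam i 1 le_rfl
    have h3 := norm_nonneg (g i 1)
    have h4 := norm_nonneg (Matrix.toEuclideanLin (A i)ᵀ (lam i 1))
    linarith
  have hσ0 : 0 ≤ sigma2 P := sigma2_nonneg P
  -- membership
  have hxmem : ∀ j : Fin n, ∀ s : ℕ, 1 ≤ s → x j s ∈ χ := by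
    intro j s hs
    induction s with
    | zero => omega
    | succ s ih =>
      rcases Nat.eq_zero_or_pos s with h0 | h1
      · subst h0; rw [hx1 j]; exact hχ0
      · rw [hxproj j s h1]; exact hprojmem _
  -- error term bound
  have hεb : ∀ j : Fin n, ∀ s : ℕ, 1 ≤ s →
      ‖x j (s+1) - ∑ k, P k j • x k s‖ ≤ 2 * (Lf + ζmax) * α s := by
    intro j s hs
    have hmem : (∑ k, P k j • x k s) ∈ χ :=
      hχconv.sum_mem (fun k _ => hPnn k j) (hPcol j) (fun k _ => hxmem k s hs)
    have hv : ‖h j (s+1) - ∑ k, P k j • x k s‖ ≤ α s * (Lf + ζmax) := by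
      rw [hhrec j s hs]
      have : (∑ k, P k j • x k s) - α s • (g j s + Matrix.toEuclideanLin (A j)ᵀ (lam j (s+1)))
          - ∑ k, P k j • x k s = -(α s • (g j s + Matrix.toEuclideanLin (A j)ᵀ (lam j (s+1)))) := by
        abel
      rw [this, norm_neg, norm_smul, Real.norm_eq_abs, abs_of_pos (hαpos s hs)]
      have := norm_add_le (g j s) (Matrix.toEuclideanLin (A j)ᵀ (lam j (s+1)))
      have h1 := hg j s hs
      have h2 := hlam j (s+1) (by omega)
      have hα := (hαpos s hs).le
      nlinarith [norm_nonneg (g j s + Matrix.toEuclideanLin (A j)ᵀ (lam j (s+1)))]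
    have hproj : ‖x j (s+1) - h j (s+1)‖ ≤ α s * (Lf + ζmax) := by
      rw [hxproj j s hs, norm_sub_rev]
      exact le_trans (hprojclosest (h j (s+1)) _ hmem) hv
    calc ‖x j (s+1) - ∑ k, P k j • x k s‖
        = ‖(x j (s+1) - h j (s+1)) + (h j (s+1) - ∑ k, P k j • x k s)‖ := by abel_nf
      _ ≤ ‖x j (s+1) - h j (s+1)‖ + ‖h j (s+1) - ∑ k, P k j • x k s‖ := norm_add_le _ _
      _ ≤ 2 * (Lf + ζmax) * α s := by linarith
  -- θ step
  have hθstep : ∀ s : ℕ, 1 ≤ s →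
      θ (s+1) = θ s + (n:ℝ)⁻¹ • ∑ k, (x k (s+1) - ∑ l, P l k • x l s) := by
    intro s hs
    rw [hθ (s+1), hθ s]
    have hdouble : ∑ k : Fin n, ∑ l, P l k • x l s = ∑ l, x l s := by
      rw [Finset.sum_comm]
      refine Finset.sum_congr rfl fun l _ => ?_
      rw [← Finset.sum_smul, hProw l, one_smul]
    calc (n:ℝ)⁻¹ • ∑ k, x k (s+1)
        = (n:ℝ)⁻¹ • ((∑ k : Fin n, ∑ l, P l k • x l s)
            + ∑ k, (x k (s+1) - ∑ l, P l k • x l s)) := by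
          rw [← Finset.sum_add_distrib]
          congr 1
          refine Finset.sum_congr rfl fun k _ => ?_
          abel
      _ = (n:ℝ)⁻¹ • ∑ l, x l s + (n:ℝ)⁻¹ • ∑ k, (x k (s+1) - ∑ l, P l k • x l s) := by
          rw [hdouble, smul_add]
  -- y recursion
  have hyrec : ∀ j : Fin n, ∀ s : ℕ, 1 ≤ s →
      x j (s+1) - θ (s+1) = (∑ k, P k j • (x k s - θ s))
        + ((x j (s+1) - ∑ l, P l j • x l s)
            - (n:ℝ)⁻¹ • ∑ k, (x k (s+1) - ∑ l, P l k • x l s)) := by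
    intro j s hs
    rw [hθstep s hs]
    have h1 : ∑ k, P k j • (x k s - θ s) = (∑ k, P k j • x k s) - θ s := by
      have : ∀ k : Fin n, P k j • (x k s - θ s) = P k j • x k s - P k j • θ s :=
        fun k => smul_sub _ _ _
      rw [Finset.sum_congr rfl fun k _ => this k, Finset.sum_sub_distrib,
        ← Finset.sum_smul, hPcol j, one_smul]
    rw [h1]
    abel
  -- sum zero
  have hysum : ∀ s : ℕ, ∀ ℓ : Fin d, ∑ k, (x k s - θ s) ℓ = 0 := by
    intro s ℓ
    have h0 : ∑ k, (x k s - θ s) = 0 := by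
      rw [Finset.sum_sub_distrib, hθ s, Finset.sum_const, Finset.card_univ,
        Fintype.card_fin, ← Nat.cast_smul_eq_nsmul ℝ, smul_smul,
        mul_inv_cancel₀ hnR, one_smul, sub_self]
    calc ∑ k, (x k s - θ s) ℓ = (∑ k, (x k s - θ s)) ℓ := by rw [WithLp.ofLp_sum, Finset.sum_apply]
      _ = 0 := by rw [h0]; rfl
  -- centered error bound
  have hbar : ∀ s : ℕ, 1 ≤ s →
      ∑ j, ‖(x j (s+1) - ∑ l, P l j • x l s)
        - (n:ℝ)⁻¹ • ∑ k, (x k (s+1) - ∑ l, P l k • x l s)‖ ^ 2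
      ≤ n * (2 * (Lf + ζmax) * α s) ^ 2 := by
    intro s hs
    set ε : Fin n → EuclideanSpace ℝ (Fin d) := fun j => x j (s+1) - ∑ l, P l j • x l s with hε
    set mm : EuclideanSpace ℝ (Fin d) := (n:ℝ)⁻¹ • ∑ k, ε k with hmm
    have hsummm : ∑ k, ε k = (n:ℝ) • mm := by
      rw [hmm, smul_smul, mul_inv_cancel₀ hnR, one_smul]
    have hA : ∑ j, ‖ε j - mm‖ ^ 2 ≤ ∑ j, ‖ε j‖ ^ 2 := by
      have hexp : ∀ j, ‖ε j - mm‖ ^ 2 = ‖ε j‖ ^ 2 - 2 * ⟪ε j, mm⟫ + ‖mm‖ ^ 2 :=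
        fun j => norm_sub_sq_real _ _
      have h2 : ∑ j, ⟪ε j, mm⟫ = (n:ℝ) * ‖mm‖ ^ 2 := by
        rw [← sum_inner, hsummm, real_inner_smul_left, real_inner_self_eq_norm_sq]
      calc ∑ j, ‖ε j - mm‖ ^ 2
          = ∑ j, (‖ε j‖ ^ 2 - 2 * ⟪ε j, mm⟫ + ‖mm‖ ^ 2) :=
            Finset.sum_congr rfl fun j _ => hexp j
        _ = ∑ j, ‖ε j‖ ^ 2 - 2 * ((n:ℝ) * ‖mm‖ ^ 2) + (n:ℝ) * ‖mm‖ ^ 2 := by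
            rw [Finset.sum_add_distrib, Finset.sum_sub_distrib, ← Finset.mul_sum, h2,
              Finset.sum_const, Finset.card_univ, Fintype.card_fin, nsmul_eq_mul]
        _ ≤ ∑ j, ‖ε j‖ ^ 2 := by
            have : 0 ≤ (n:ℝ) * ‖mm‖ ^ 2 := by positivity
            linarith
    have hB : ∑ j, ‖ε j‖ ^ 2 ≤ n * (2 * (Lf + ζmax) * α s) ^ 2 := by
      have : ∀ j : Fin n, ‖ε j‖ ^ 2 ≤ (2 * (Lf + ζmax) * α s) ^ 2 := by
        intro j
        have h1 := hεb j s hs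
        have h2 := norm_nonneg (ε j)
        nlinarith
      calc ∑ j, ‖ε j‖ ^ 2 ≤ ∑ _j : Fin n, (2 * (Lf + ζmax) * α s) ^ 2 :=
            Finset.sum_le_sum fun j _ => this j
        _ = n * (2 * (Lf + ζmax) * α s) ^ 2 := by
            rw [Finset.sum_const, Finset.card_univ, Fintype.card_fin, nsmul_eq_mul]
    linarith
  -- the main induction
  have key : ∀ s : ℕ, 1 ≤ s → Real.sqrt (∑ j, ‖x j s - θ s‖ ^ 2)
      ≤ Real.sqrt n * (2 * (Lf + ζmax))
        * ∑ k ∈ Finset.Icc 1 (s - 1), α (s - k) * sigma2 P ^ (k - 1) := by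
    intro s hs
    induction s, hs using Nat.le_induction with
    | base =>
      have hθ1 : θ 1 = 0 := by
        rw [hθ 1]
        have : ∑ k : Fin n, x k 1 = 0 := by
          rw [Finset.sum_congr rfl fun k _ => hx1 k, Finset.sum_const, smul_zero]
        rw [this, smul_zero]
      have hIcc : Finset.Icc 1 (1 - 1 : ℕ) = ∅ := by
        rw [show (1:ℕ) - 1 = 0 from rfl]
        exact Finset.Icc_eq_empty (by omega)
      rw [hIcc]
      simp [hx1, hθ1]
    | succ s hs IH =>
      set σ := sigma2 P with hσ
      set C := 2 * (Lf + ζmax) with hCeq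
      set S : ℕ → ℝ := fun u => ∑ k ∈ Finset.Icc 1 (u - 1), α (u - k) * σ ^ (k - 1) with hS
      -- the PiLp vectors
      set ZL : PiLp 2 (fun _ : Fin n => EuclideanSpace ℝ (Fin d)) :=
        WithLp.toLp 2 (fun j => ∑ k, P k j • (x k s - θ s)) with hZL
      set ZR : PiLp 2 (fun _ : Fin n => EuclideanSpace ℝ (Fin d)) :=
        WithLp.toLp 2 (fun j => (x j (s+1) - ∑ l, P l j • x l s)
          - (n:ℝ)⁻¹ • ∑ k, (x k (s+1) - ∑ l, P l k • x l s)) with hZR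
      have hsplit : Real.sqrt (∑ j, ‖x j (s+1) - θ (s+1)‖ ^ 2)
          ≤ Real.sqrt (∑ j, ‖ZL j‖ ^ 2) + Real.sqrt (∑ j, ‖ZR j‖ ^ 2) := by
        have h1 : ∀ j, x j (s+1) - θ (s+1) = (ZL + ZR) j := fun j => hyrec j s hs
        calc Real.sqrt (∑ j, ‖x j (s+1) - θ (s+1)‖ ^ 2) = ‖ZL + ZR‖ := by
              rw [PiLp.norm_eq_of_L2]
              congr 1
              exact Finset.sum_congr rfl fun j _ => by rw [h1 j]
          _ ≤ ‖ZL‖ + ‖ZR‖ := norm_add_le _ _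
          _ = Real.sqrt (∑ j, ‖ZL j‖ ^ 2) + Real.sqrt (∑ j, ‖ZR j‖ ^ 2) := by
              rw [PiLp.norm_eq_of_L2, PiLp.norm_eq_of_L2]
      have hL : ∑ j, ‖ZL j‖ ^ 2 ≤ σ ^ 2 * ∑ j, ‖x j s - θ s‖ ^ 2 := by
        have hcomp : ∀ (j : Fin n) (ℓ : Fin d),
            (ZL j) ℓ = (Pᵀ *ᵥ (fun k => (x k s - θ s) ℓ)) j := by
          intro j ℓ
          rw [hZL]
          calc (∑ k, P k j • (x k s - θ s)) ℓ = ∑ k, (P k j • (x k s - θ s)) ℓ := by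
                rw [WithLp.ofLp_sum, Finset.sum_apply]
            _ = ∑ k, P k j * (x k s - θ s) ℓ := rfl
            _ = (Pᵀ *ᵥ (fun k => (x k s - θ s) ℓ)) j := by
                simp [Matrix.mulVec, dotProduct, Matrix.transpose_apply]
        calc ∑ j, ‖ZL j‖ ^ 2 = ∑ j, ∑ ℓ, ((ZL j) ℓ) ^ 2 :=
              Finset.sum_congr rfl fun j _ => euclid_norm_sq _
          _ = ∑ ℓ, ∑ j, ((Pᵀ *ᵥ (fun k => (x k s - θ s) ℓ)) j) ^ 2 := by
              rw [Finset.sum_comm]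
              exact Finset.sum_congr rfl fun ℓ _ =>
                Finset.sum_congr rfl fun j _ => by rw [hcomp j ℓ]
          _ ≤ ∑ ℓ, σ ^ 2 * ∑ k, ((x k s - θ s) ℓ) ^ 2 :=
              Finset.sum_le_sum fun ℓ _ =>
                mix P hPnn hProw hPcol (fun k => (x k s - θ s) ℓ) (hysum s ℓ)
          _ = σ ^ 2 * ∑ j, ‖x j s - θ s‖ ^ 2 := by
              rw [← Finset.mul_sum, Finset.sum_comm]
              congr 1
              exact Finset.sum_congr rfl fun j _ => (euclid_norm_sq _).symm
      have hLs : Real.sqrt (∑ j, ‖ZL j‖ ^ 2) ≤ σ * Real.sqrt (∑ j, ‖x j s - θ s‖ ^ 2) := by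
        calc Real.sqrt (∑ j, ‖ZL j‖ ^ 2)
            ≤ Real.sqrt (σ ^ 2 * ∑ j, ‖x j s - θ s‖ ^ 2) := Real.sqrt_le_sqrt hL
          _ = σ * Real.sqrt (∑ j, ‖x j s - θ s‖ ^ 2) := by
              rw [Real.sqrt_mul (sq_nonneg σ), Real.sqrt_sq hσ0]
      have hRs : Real.sqrt (∑ j, ‖ZR j‖ ^ 2) ≤ Real.sqrt n * (C * α s) := by
        have h1 : ∑ j, ‖ZR j‖ ^ 2 ≤ n * (C * α s) ^ 2 := by
          have := hbar s hs
          calc ∑ j, ‖ZR j‖ ^ 2 ≤ n * (2 * (Lf + ζmax) * α s) ^ 2 := this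
            _ = n * (C * α s) ^ 2 := by rw [hCeq]
        calc Real.sqrt (∑ j, ‖ZR j‖ ^ 2) ≤ Real.sqrt (n * (C * α s) ^ 2) :=
              Real.sqrt_le_sqrt h1
          _ = Real.sqrt n * (C * α s) := by
              rw [Real.sqrt_mul (Nat.cast_nonneg n), Real.sqrt_sq
                (mul_nonneg (by rw [hCeq]; linarith) (hαpos s hs).le)]
      have hSrec : S (s+1) = α s + σ * S s := by
        have hl : S (s+1) = ∑ k ∈ Finset.Icc 1 s, α (s + 1 - k) * σ ^ (k - 1) := by
          rw [hS]; norm_num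
        have hIco : ∀ (u : ℕ) (f : ℕ → ℝ), ∑ k ∈ Finset.Icc 1 u, f k
            = ∑ j ∈ Finset.range u, f (1 + j) := by
          intro u f
          rw [← Finset.Ico_add_one_right_eq_Icc, Finset.sum_Ico_eq_sum_range]
          norm_num
        rw [hl, hIco]
        have hrange : ∑ j ∈ Finset.range s, α (s + 1 - (1 + j)) * σ ^ (1 + j - 1)
            = ∑ j ∈ Finset.range s, α (s - j) * σ ^ j := by
          refine Finset.sum_congr rfl fun j _ => ?_
          congr 2 <;> omega
        rw [hrange]
        have hsplit2 : ∑ j ∈ Finset.range s, α (s - j) * σ ^ j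
            = α s + σ * ∑ j ∈ Finset.range (s-1), α (s - 1 - j) * σ ^ j := by
          have hs' : s = (s - 1) + 1 := by omega
          rw [hs', Finset.sum_range_succ']
          have h0 : α ((s-1) + 1 - 0) * σ ^ 0 = α s := by
            rw [pow_zero, mul_one]
            congr 1
            omega
          have hsh : ∀ j ∈ Finset.range (s-1),
              α ((s-1) + 1 - (j+1)) * σ ^ (j+1) = σ * (α (s - 1 - j) * σ ^ j) := by
            intro j _
            rw [pow_succ]
            have : (s-1) + 1 - (j+1) = s - 1 - j := by omega
            rw [this]
            ring
          rw [Finset.sum_congr rfl hsh, ← Finset.mul_sum, h0]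
          ring_nf
          rw [show 1 + (s-1) = s from by omega]
        have hr : S s = ∑ j ∈ Finset.range (s-1), α (s - 1 - j) * σ ^ j := by
          rw [hS]
          simp only
          rw [hIco]
          refine Finset.sum_congr rfl fun j _ => ?_
          congr 2 <;> omega
        rw [hsplit2, hr]
      calc Real.sqrt (∑ j, ‖x j (s+1) - θ (s+1)‖ ^ 2)
          ≤ Real.sqrt (∑ j, ‖ZL j‖ ^ 2) + Real.sqrt (∑ j, ‖ZR j‖ ^ 2) := hsplit
        _ ≤ σ * Real.sqrt (∑ j, ‖x j s - θ s‖ ^ 2) + Real.sqrt n * (C * α s) := by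
            have := add_le_add hLs hRs; linarith
        _ ≤ σ * (Real.sqrt n * C * S s) + Real.sqrt n * (C * α s) := by
            have h2 : σ * Real.sqrt (∑ j, ‖x j s - θ s‖ ^ 2) ≤ σ * (Real.sqrt n * C * S s) :=
              mul_le_mul_of_nonneg_left IH hσ0
            linarith
        _ = Real.sqrt n * C * (α s + σ * S s) := by ring
        _ = Real.sqrt n * C * S (s+1) := by rw [hSrec]
  -- conclusion
  have hsingle : ‖θ t - x i t‖ ≤ Real.sqrt (∑ j, ‖x j t - θ t‖ ^ 2) := by
    rw [norm_sub_rev]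
    calc ‖x i t - θ t‖ = Real.sqrt (‖x i t - θ t‖ ^ 2) :=
          (Real.sqrt_sq (norm_nonneg _)).symm
      _ ≤ Real.sqrt (∑ j, ‖x j t - θ t‖ ^ 2) :=
          Real.sqrt_le_sqrt (Finset.single_le_sum (fun j _ => sq_nonneg ‖x j t - θ t‖)
            (Finset.mem_univ i))
  calc ‖θ t - x i t‖ ≤ Real.sqrt (∑ j, ‖x j t - θ t‖ ^ 2) := hsingle
    _ ≤ Real.sqrt n * (2 * (Lf + ζmax))
        * ∑ k ∈ Finset.Icc 1 (t - 1), α (t - k) * sigma2 P ^ (k - 1) := key t ht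
    _ = 2 * Real.sqrt n * (Lf + ζmax)
        * ∑ k ∈ Finset.Icc 1 (t - 1), α (t - k) * sigma2 P ^ (k - 1) := by ring
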